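/- There exists an absolute constant A > 0 such that the following holds. Let I ⊂ ℤ be a finite nonempty interval of integers, and let a, b, q be integers with q ≥ 2, gcd(a, q) = 1, and: b arbitrary when q is odd, b even when q ≡ 0 (mod 4), b odd when q ≡ 2 (mod 4). Then there exists a real number C with 1/2 ≤ C ≤ √2 such that | |∑_{k ∈ I} e^{2πi(a k² + b k)/q}| − C·|I|/√q | ≤ A √(q ln q), where |I| denotes the number of integers in I. -/

import Mathlib

open Finset Complex

/-! ### Generic integer helpers -/

private lemma int_dvd_small {q x : ℤ} (hq : 0 < q) (h : q ∣ x) (hx : |x| < q) : x = 0 := by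
  obtain ⟨e, rfl⟩ := h
  rcases eq_or_ne e 0 with rfl | he
  · ring
  · exfalso
    have h1 : (1 : ℤ) ≤ |e| := Int.one_le_abs (by exact_mod_cast he)
    have : |q * e| = |q| * |e| := abs_mul _ _
    rw [this, abs_of_pos hq] at hx
    nlinarith

private lemma emod_sub_emod (x y q : ℤ) : (x - y % q) % q = (x - y) % q := by
  conv_rhs => rw [Int.sub_emod, ← Int.emod_emod_of_dvd y (dvd_refl q), ← Int.sub_emod]

private lemma emod_add_emod' (x y q : ℤ) : (x + y % q) % q = (x + y) % q := by
  conv_rhs => rw [Int.add_emod, ← Int.emod_emod_of_dvd y (dvd_refl q), ← Int.add_emod]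

private lemma emod_self_sub (x q : ℤ) : q ∣ x - x % q := by
  have := Int.emod_add_mul_ediv x q
  exact ⟨x / q, by linarith⟩

/-! ### The basic exponential -/

noncomputable def eI (q x : ℤ) : ℂ :=
  Complex.exp (2 * (Real.pi : ℂ) * Complex.I * ((x : ℂ) / (q : ℂ)))

lemma eI_add (q x y : ℤ) : eI q (x + y) = eI q x * eI q y := by
  rw [eI, eI, eI, ← Complex.exp_add]
  congr 1
  push_cast
  ring

lemma eI_zero (q : ℤ) : eI q 0 = 1 := by simp [eI]

lemma eI_real (q x : ℤ) : eI q x = Complex.exp (((2 * Real.pi * (x : ℝ) / (q : ℝ) : ℝ) : ℂ) * Complex.I) := by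
  rw [eI]
  congr 1
  push_cast
  ring

lemma eI_abs (q x : ℤ) : norm (eI q x) = 1 := by
  rw [eI_real]; exact Complex.norm_exp_ofReal_mul_I _

lemma eI_conj (q x : ℤ) : (starRingEnd ℂ) (eI q x) = eI q (-x) := by
  rw [eI_real, eI_real, ← Complex.exp_conj]
  congr 1
  simp only [map_mul, map_neg, Complex.conj_ofReal, Complex.conj_I, map_ofNat]
  push_cast
  ring

lemma eI_pow (q x : ℤ) (n : ℕ) : eI q x ^ n = eI q (n * x) := by
  rw [eI, ← Complex.exp_nat_mul, eI]
  congr 1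
  push_cast
  ring

lemma eI_dvd {q x : ℤ} (hq : q ≠ 0) (h : q ∣ x) : eI q x = 1 := by
  obtain ⟨c, rfl⟩ := h
  rw [eI]
  have : ((q * c : ℤ) : ℂ) / (q : ℂ) = (c : ℂ) := by
    have hq' : (q : ℂ) ≠ 0 := Int.cast_ne_zero.mpr hq
    push_cast
    field_simp
  rw [this]
  have := Complex.exp_int_mul_two_pi_mul_I c
  rw [← this]
  congr 1
  ring

lemma eI_congr {q x y : ℤ} (hq : q ≠ 0) (h : q ∣ x - y) : eI q x = eI q y := by
  have : x = y + (x - y) := by ring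
  rw [this, eI_add, eI_dvd hq h, mul_one]

lemma eI_eq_one_iff {q x : ℤ} (hq : 0 < q) : eI q x = 1 ↔ q ∣ x := by
  constructor
  · intro h
    rw [eI, Complex.exp_eq_one_iff] at h
    obtain ⟨n, hn⟩ := h
    have h2 : (2 : ℂ) * Real.pi * Complex.I ≠ 0 := by
      simp [Real.pi_ne_zero, Complex.I_ne_zero]
    have hn' : ((x : ℂ) / (q : ℂ)) = (n : ℂ) := by
      have : 2 * (Real.pi : ℂ) * Complex.I * ((x : ℂ) / (q : ℂ))
          = 2 * (Real.pi : ℂ) * Complex.I * (n : ℂ) := by rw [hn]; ring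
      exact mul_left_cancel₀ h2 this
    have hq' : (q : ℂ) ≠ 0 := Int.cast_ne_zero.mpr hq.ne'
    have : (x : ℂ) = (n : ℂ) * (q : ℂ) := by
      field_simp at hn'
      linear_combination hn'
    have : (x : ℤ) = n * q := by exact_mod_cast this
    exact ⟨n, by linarith⟩
  · exact eI_dvd hq.ne'

/-! ### Geometric sums -/

lemma eI_geom (q : ℤ) (hq : 0 < q) (c : ℤ) :
    ∑ j ∈ Finset.range q.toNat, eI q c ^ j = if q ∣ c then (q : ℂ) else 0 := by
  by_cases h : q ∣ c
  · simp only [h, if_true, eI_dvd hq.ne' h, one_pow, Finset.sum_const, Finset.card_range,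
      nsmul_eq_mul, mul_one]
    norm_cast
    omega
  · have hz : eI q c ≠ 1 := fun hc => h ((eI_eq_one_iff hq).mp hc)
    rw [geom_sum_eq hz, if_neg h]
    have : eI q c ^ q.toNat = 1 := by
      rw [eI_pow]
      apply eI_dvd hq.ne'
      have : (q.toNat : ℤ) = q := Int.toNat_of_nonneg hq.le
      rw [this]
      exact Dvd.intro c rfl
    rw [this]
    simp

lemma eI_geom_bound {q : ℤ} (hq : 2 ≤ q) {c : ℤ} (hc : ¬ c % q = 0) (n : ℕ) :
    norm (∑ j ∈ Finset.range n, eI q c ^ j)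
      ≤ (q : ℝ) / (2 * ((min (c % q) (q - c % q) : ℤ) : ℝ)) := by
  have hq0 : (0 : ℤ) < q := by omega
  set v : ℤ := c % q with hv
  have hv0 : 0 ≤ v := Int.emod_nonneg c hq0.ne'
  have hvq : v < q := Int.emod_lt_of_pos c hq0
  have hv1 : 1 ≤ v := by omega
  have hzc : eI q c = eI q v := eI_congr hq0.ne' (emod_self_sub c q)
  have hz1 : eI q c ≠ 1 := by
    rw [hzc, Ne, eI_eq_one_iff hq0]
    intro hdvd
    have := Int.le_of_dvd (by omega) hdvd
    omega
  -- numerator bound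
  have hnum : norm (eI q c ^ n - 1) ≤ 2 := by
    calc ‖eI q c ^ n - 1‖ ≤ ‖eI q c ^ n‖ + ‖(1:ℂ)‖ :=
          norm_sub_le _ _
    _ ≤ 2 := by
        rw [norm_pow, eI_abs]
        norm_num
  -- denominator lower bound
  set α : ℝ := Real.pi * (v : ℝ) / (q : ℝ) with hα
  have hqR : (0 : ℝ) < (q : ℝ) := by exact_mod_cast hq0
  have hα0 : 0 ≤ α := by
    apply div_nonneg _ hqR.le
    have : (0:ℝ) ≤ (v:ℝ) := by exact_mod_cast hv0
    positivity
  have hαπ : α ≤ Real.pi := by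
    rw [hα, div_le_iff₀ hqR]
    have hvR : (v : ℝ) ≤ (q : ℝ) := by exact_mod_cast hvq.le
    nlinarith [Real.pi_pos]
  have hsin0 : 0 ≤ Real.sin α := Real.sin_nonneg_of_nonneg_of_le_pi hα0 hαπ
  have habs : norm (eI q c - 1) = 2 * Real.sin α := by
    rw [hzc, eI_real]
    set β : ℝ := 2 * α with hβdef
    have h2α : 2 * Real.pi * (v : ℝ) / (q : ℝ) = β := by rw [hβdef, hα]; ring
    rw [h2α]
    have hre : (Complex.exp ((β : ℂ) * Complex.I) - 1).re = Real.cos β - 1 := by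
      rw [Complex.sub_re, Complex.exp_ofReal_mul_I_re, Complex.one_re]
    have him : (Complex.exp ((β : ℂ) * Complex.I) - 1).im = Real.sin β := by
      rw [Complex.sub_im, Complex.exp_ofReal_mul_I_im, Complex.one_im, sub_zero]
    rw [Complex.norm_def, Complex.normSq_apply, hre, him]
    rw [hβdef]
    have hcos : Real.cos (2 * α) = 1 - 2 * Real.sin α ^ 2 := by
      rw [Real.cos_two_mul ]
      have := Real.sin_sq_add_cos_sq α
      nlinarith
    have : (Real.cos (2*α) - 1) * (Real.cos (2*α) - 1) + Real.sin (2*α) * Real.sin (2*α)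
        = (2 * Real.sin α) ^ 2 := by
      have := Real.sin_sq_add_cos_sq (2*α)
      nlinarith
    rw [this, Real.sqrt_sq (by linarith)]
  set M : ℤ := min v (q - v) with hM
  have hM1 : 1 ≤ M := by omega
  have hMR : (0 : ℝ) < ((M : ℤ) : ℝ) := by exact_mod_cast hM1.trans_lt' (by norm_num)
  have hjordan : 2 * ((M : ℤ) : ℝ) / (q : ℝ) ≤ Real.sin α := by
    rcases le_or_gt (2 * v) q with h2v | h2v
    · have hMv : M = v := by omega
      have hαle : α ≤ Real.pi / 2 := by
        rw [hα, div_le_div_iff₀ hqR (by norm_num)]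
        have hvR : 2 * (v : ℝ) ≤ (q : ℝ) := by exact_mod_cast h2v
        nlinarith [Real.pi_pos]
      have := Real.mul_le_sin hα0 hαle
      rw [hMv]
      calc 2 * ((v:ℤ):ℝ) / (q:ℝ) = 2 / Real.pi * α := by
            rw [hα]; field_simp [Real.pi_ne_zero]
      _ ≤ Real.sin α := this
    · have hMv : M = q - v := by omega
      have heq : Real.sin α = Real.sin (Real.pi - α) := (Real.sin_pi_sub α).symm
      have hβ : Real.pi - α = Real.pi * ((q - v : ℤ):ℝ) / (q : ℝ) := by
        rw [hα]
        push_cast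
        field_simp
      have hβ0 : 0 ≤ Real.pi - α := by linarith
      have hβle : Real.pi - α ≤ Real.pi / 2 := by
        rw [hβ, div_le_div_iff₀ hqR (by norm_num)]
        have : 2 * ((q - v : ℤ):ℝ) ≤ (q:ℝ) := by
          have : 2 * (q - v) ≤ q := by omega
          exact_mod_cast this
        nlinarith [Real.pi_pos]
      have := Real.mul_le_sin hβ0 hβle
      rw [heq, hMv]
      calc 2 * ((q - v:ℤ):ℝ) / (q:ℝ) = 2 / Real.pi * (Real.pi - α) := by
            rw [hβ]; field_simp [Real.pi_ne_zero]
      _ ≤ Real.sin (Real.pi - α) := this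
  have hden : 4 * ((M:ℤ):ℝ) / (q:ℝ) ≤ norm (eI q c - 1) := by
    rw [habs]
    have : 4 * ((M:ℤ):ℝ) / (q:ℝ) = 2 * (2 * ((M:ℤ):ℝ) / (q:ℝ)) := by ring
    rw [this]
    linarith
  have hdenpos : (0:ℝ) < 4 * ((M:ℤ):ℝ) / (q:ℝ) := by positivity
  rw [geom_sum_eq hz1, norm_div]
  calc norm (eI q c ^ n - 1) / norm (eI q c - 1)
      ≤ 2 / (4 * ((M:ℤ):ℝ) / (q:ℝ)) := div_le_div₀ (by norm_num) hnum hdenpos hden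
  _ = (q:ℝ) / (2 * ((M:ℤ):ℝ)) := by field_simp; ring


/-! ### Sums over blocks of length q -/

lemma sum_block {q : ℤ} (hq : 0 < q) (h : ℤ → ℂ)
    (hper : ∀ k k' : ℤ, q ∣ k - k' → h k = h k') (c : ℤ) :
    ∑ k ∈ Finset.Ico c (c + q), h k = ∑ k ∈ Finset.Ico (0 : ℤ) q, h k := by
  apply Finset.sum_nbij' (i := fun k => k % q) (j := fun v => c + (v - c) % q)
  · intro k hk
    simp only [Finset.mem_Ico]
    exact ⟨Int.emod_nonneg k hq.ne', Int.emod_lt_of_pos k hq⟩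
  · intro v hv
    simp only [Finset.mem_Ico]
    have h1 := Int.emod_nonneg (v - c) hq.ne'
    have h2 := Int.emod_lt_of_pos (v - c) hq
    omega
  · intro k hk
    simp only [Finset.mem_Ico] at hk
    have : (k % q - c) % q = (k - c) % q := by
      conv_rhs => rw [Int.sub_emod, ← Int.emod_emod_of_dvd k (dvd_refl q), ← Int.sub_emod]
    rw [this, Int.emod_eq_of_lt (by omega) (by omega)]
    ring
  · intro v hv
    simp only [Finset.mem_Ico] at hv
    rw [emod_add_emod', show c + (v - c) = v by ring, Int.emod_eq_of_lt (by omega) (by omega)]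
  · intro k hk
    exact hper k (k % q) (emod_self_sub k q)

lemma sum_split {q : ℤ} (hq : 0 < q) (h : ℤ → ℂ)
    (hper : ∀ k k' : ℤ, q ∣ k - k' → h k = h k') (L r : ℤ) (hr : 0 ≤ r) :
    ∀ m : ℕ, ∑ k ∈ Finset.Ico L (L + (q * m + r)), h k
      = (m : ℂ) * (∑ k ∈ Finset.Ico (0 : ℤ) q, h k) + ∑ k ∈ Finset.Ico L (L + r), h k := by
  intro m
  induction m with
  | zero => simp
  | succ m ih =>
    have hm0 : (0:ℤ) ≤ q * m := mul_nonneg hq.le (by positivity)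
    have h1 : L ≤ L + (q * m + r) := by omega
    have h2 : L + (q * m + r) ≤ L + (q * (m+1) + r) := by
      have : q * (m:ℤ) ≤ q * ((m:ℤ)+1) := by nlinarith
      push_cast
      omega
    have hsplit : Finset.Ico L (L + (q * ((m:ℕ)+1:ℕ) + r))
        = Finset.Ico L (L + (q * m + r)) ∪ Finset.Ico (L + (q * m + r)) (L + (q * ((m:ℕ)+1:ℕ) + r)) := by
      rw [Finset.Ico_union_Ico_eq_Ico h1 (by push_cast; push_cast at h2; omega)]
    rw [hsplit, Finset.sum_union (Finset.Ico_disjoint_Ico_consecutive _ _ _), ih]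
    have hblock : ∑ k ∈ Finset.Ico (L + (q * m + r)) (L + (q * ((m:ℕ)+1:ℕ) + r)), h k
        = ∑ k ∈ Finset.Ico (0:ℤ) q, h k := by
      have : L + (q * ((m:ℕ)+1:ℕ) + r) = (L + (q * m + r)) + q := by push_cast; ring
      rw [this]
      exact sum_block hq h hper _
    rw [hblock]
    push_cast
    ring

lemma sum_reflect {q : ℤ} (hq : 0 < q) (h : ℤ → ℂ)
    (hper : ∀ k k' : ℤ, q ∣ k - k' → h k = h k') (e : ℤ) :
    ∑ l ∈ Finset.Ico (0:ℤ) q, h l = ∑ d ∈ Finset.Ico (0:ℤ) q, h (e - d) := by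
  apply Finset.sum_nbij' (i := fun l => (e - l) % q) (j := fun d => (e - d) % q)
  · intro l hl
    simp only [Finset.mem_Ico]
    exact ⟨Int.emod_nonneg _ hq.ne', Int.emod_lt_of_pos _ hq⟩
  · intro d hd
    simp only [Finset.mem_Ico]
    exact ⟨Int.emod_nonneg _ hq.ne', Int.emod_lt_of_pos _ hq⟩
  · intro l hl
    simp only [Finset.mem_Ico] at hl
    rw [emod_sub_emod, show e - (e - l) = l by ring, Int.emod_eq_of_lt (by omega) (by omega)]
  · intro d hd
    simp only [Finset.mem_Ico] at hd
    rw [emod_sub_emod, show e - (e - d) = d by ring, Int.emod_eq_of_lt (by omega) (by omega)]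
  · intro l hl
    apply hper
    have h1 : q ∣ (e - l) - (e - l) % q := emod_self_sub (e - l) q
    obtain ⟨c, hc⟩ := h1
    exact ⟨-c, by linarith⟩

lemma ico_range {q : ℤ} (hq : 0 < q) (h : ℤ → ℂ) :
    ∑ k ∈ Finset.Ico (0:ℤ) q, h k = ∑ j ∈ Finset.range q.toNat, h (j : ℤ) := by
  refine Finset.sum_nbij' (fun k => k.toNat) (fun j => (j : ℤ)) ?_ ?_ ?_ ?_ ?_
  · intro k hk
    simp only [Finset.mem_Ico] at hk
    simp only [Finset.mem_range]
    omega
  · intro j hj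
    simp only [Finset.mem_range] at hj
    simp only [Finset.mem_Ico]
    omega
  · intro k hk
    simp only [Finset.mem_Ico] at hk
    show ((k.toNat : ℤ)) = k
    omega
  · intro j hj
    show (j:ℤ).toNat = j
    omega
  · intro k hk
    simp only [Finset.mem_Ico] at hk
    show h k = h ((k.toNat : ℤ))
    rw [Int.toNat_of_nonneg hk.1]

lemma quad_per (a b q : ℤ) : ∀ k k' : ℤ, q ∣ k - k' →
    eI q (a * k ^ 2 + b * k) = eI q (a * k' ^ 2 + b * k') := by
  intro k k' hd
  rcases eq_or_ne q 0 with rfl | hq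
  · obtain ⟨c, hc⟩ := hd
    have : k = k' := by omega
    rw [this]
  · apply eI_congr hq
    have : a * k ^ 2 + b * k - (a * k' ^ 2 + b * k') = (k - k') * (a * (k + k') + b) := by ring
    rw [this]
    exact hd.mul_right _

lemma a_odd_of_q_even {a q : ℤ} (ha : Int.gcd a q = 1) (h2 : 2 ∣ q) : Odd a := by
  rcases Int.even_or_odd a with he | ho
  · exfalso
    have hco : IsCoprime a q := Int.isCoprime_iff_gcd_eq_one.mpr ha
    obtain ⟨u, v, huv⟩ := hco
    obtain ⟨a', rfl⟩ := he
    obtain ⟨q', rfl⟩ := h2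
    have : (2:ℤ) ∣ 1 := ⟨u * a' + v * q', by linarith⟩
    norm_num at this
  · exact ho

lemma gauss_sq (a b q : ℤ) (hq : 2 ≤ q) (ha : Int.gcd a q = 1)
    (hb4 : q % 4 = 0 → Even b) (hb2 : q % 4 = 2 → Odd b) :
    (∑ k ∈ Finset.Ico (0:ℤ) q, eI q (a * k ^ 2 + b * k)) *
      (starRingEnd ℂ) (∑ k ∈ Finset.Ico (0:ℤ) q, eI q (a * k ^ 2 + b * k))
    = if 2 ∣ q then ((2 * q : ℤ) : ℂ) else ((q : ℤ) : ℂ) := by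
  have hq0 : (0:ℤ) < q := by omega
  have hco : IsCoprime (q:ℤ) a := (Int.isCoprime_iff_gcd_eq_one.mpr ha).symm
  rw [map_sum, Finset.sum_mul_sum]
  have hstep1 : ∀ k ∈ Finset.Ico (0:ℤ) q,
      ∑ l ∈ Finset.Ico (0:ℤ) q, eI q (a * k ^ 2 + b * k) * (starRingEnd ℂ) (eI q (a * l ^ 2 + b * l))
      = ∑ d ∈ Finset.Ico (0:ℤ) q, eI q (a * k ^ 2 + b * k) * (starRingEnd ℂ) (eI q (a * (k - d) ^ 2 + b * (k - d))) := by
    intro k _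
    rw [← Finset.mul_sum, ← Finset.mul_sum]
    congr 1
    exact sum_reflect hq0 (fun l => (starRingEnd ℂ) (eI q (a * l ^ 2 + b * l)))
      (fun x y hxy => congrArg (starRingEnd ℂ) (quad_per a b q x y hxy)) k
  rw [Finset.sum_congr rfl hstep1, Finset.sum_comm]
  have hstep2 : ∀ d ∈ Finset.Ico (0:ℤ) q,
      ∑ k ∈ Finset.Ico (0:ℤ) q, eI q (a * k ^ 2 + b * k) * (starRingEnd ℂ) (eI q (a * (k - d) ^ 2 + b * (k - d)))
      = eI q (b * d - a * d ^ 2) * (if q ∣ 2 * a * d then (q:ℂ) else 0) := by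
    intro d _
    have hterm : ∀ k : ℤ, eI q (a * k ^ 2 + b * k) * (starRingEnd ℂ) (eI q (a * (k - d) ^ 2 + b * (k - d)))
        = eI q (b * d - a * d ^ 2) * eI q (2 * a * d) ^ k.toNat ∨ True := fun _ => Or.inr trivial
    have key : ∀ j : ℕ, eI q (a * (j:ℤ) ^ 2 + b * (j:ℤ)) * (starRingEnd ℂ) (eI q (a * ((j:ℤ) - d) ^ 2 + b * ((j:ℤ) - d)))
        = eI q (b * d - a * d ^ 2) * eI q (2 * a * d) ^ j := by
      intro j
      rw [eI_conj, ← eI_add, eI_pow, ← eI_add]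
      congr 1
      ring
    rw [ico_range hq0]
    calc ∑ j ∈ Finset.range q.toNat,
          eI q (a * (j:ℤ) ^ 2 + b * (j:ℤ)) * (starRingEnd ℂ) (eI q (a * ((j:ℤ) - d) ^ 2 + b * ((j:ℤ) - d)))
        = ∑ j ∈ Finset.range q.toNat, eI q (b * d - a * d ^ 2) * eI q (2 * a * d) ^ j := by
          exact Finset.sum_congr rfl (fun j _ => key j)
      _ = eI q (b * d - a * d ^ 2) * ∑ j ∈ Finset.range q.toNat, eI q (2 * a * d) ^ j := by
          rw [Finset.mul_sum]
      _ = eI q (b * d - a * d ^ 2) * (if q ∣ 2 * a * d then (q:ℂ) else 0) := by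
          rw [eI_geom q hq0]
  rw [Finset.sum_congr rfl hstep2]
  -- reduce to the filtered sum
  have hite : ∀ d : ℤ, eI q (b * d - a * d ^ 2) * (if q ∣ 2 * a * d then (q:ℂ) else 0)
      = if q ∣ 2 * a * d then eI q (b * d - a * d ^ 2) * (q:ℂ) else 0 := by
    intro d
    split <;> simp
  simp only [hite]
  rw [← Finset.sum_filter]
  have hchar : ∀ d : ℤ, 0 ≤ d → d < q → (q ∣ 2 * a * d ↔ (d = 0 ∨ 2 * d = q)) := by
    intro d hd0 hdq
    constructor
    · intro hdvd
      have h2d : q ∣ 2 * d := by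
        apply hco.dvd_of_dvd_mul_right
        have : 2 * d * a = 2 * a * d := by ring
        rw [this]
        exact hdvd
      obtain ⟨e, he⟩ := h2d
      have he0 : 0 ≤ e := by nlinarith
      have he2 : e < 2 := by nlinarith
      interval_cases e <;> omega
    · rintro (rfl | h2d)
      · simp
      · exact ⟨a, by linear_combination a * h2d⟩
  by_cases h2q : 2 ∣ q
  · have hfil : (Finset.Ico (0:ℤ) q).filter (fun d => q ∣ 2 * a * d) = {0, q / 2} := by
      ext d
      simp only [Finset.mem_filter, Finset.mem_Ico, Finset.mem_insert, Finset.mem_singleton]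
      constructor
      · rintro ⟨⟨hd0, hdq⟩, hdvd⟩
        rcases (hchar d hd0 hdq).mp hdvd with rfl | h2d
        · left; rfl
        · right; omega
      · rintro (rfl | rfl)
        · exact ⟨⟨le_refl _, hq0⟩, (hchar 0 (le_refl _) hq0).mpr (Or.inl rfl)⟩
        · have hh : 2 * (q / 2) = q := by omega
          exact ⟨⟨by omega, by omega⟩, (hchar _ (by omega) (by omega)).mpr (Or.inr hh)⟩
    rw [hfil, if_pos h2q]
    have hne : (0:ℤ) ∉ ({q / 2} : Finset ℤ) := by
      simp only [Finset.mem_singleton]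
      omega
    rw [Finset.sum_insert hne, Finset.sum_singleton]
    have he0 : eI q (b * 0 - a * 0 ^ 2) = 1 := by
      norm_num [eI_zero]
    have heh : eI q (b * (q/2) - a * (q/2) ^ 2) = 1 := by
      apply eI_dvd hq0.ne'
      set h : ℤ := q / 2 with hh
      have hqh : q = 2 * h := by omega
      have haodd : Odd a := a_odd_of_q_even ha h2q
      have h2bh : 2 ∣ b - a * h := by
        have hq4 : q % 4 = 0 ∨ q % 4 = 2 := by omega
        rcases hq4 with h4 | h4
        · have hbe : Even b := hb4 h4
          have hhe : Even h := by
            rw [Int.even_iff]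
            omega
          have : Even (a * h) := hhe.mul_left a
          have := hbe.sub this
          exact this.two_dvd
        · have hbo : Odd b := hb2 h4
          have hho : Odd h := by
            rw [Int.odd_iff]
            omega
          have : Odd (a * h) := haodd.mul hho
          have := hbo.sub_odd this
          exact this.two_dvd
      obtain ⟨c, hc⟩ := h2bh
      exact ⟨c, by rw [hqh]; linear_combination h * hc⟩
    rw [he0, heh]
    push_cast
    ring
  · have hfil : (Finset.Ico (0:ℤ) q).filter (fun d => q ∣ 2 * a * d) = {0} := by
      ext d
      simp only [Finset.mem_filter, Finset.mem_Ico, Finset.mem_singleton]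
      constructor
      · rintro ⟨⟨hd0, hdq⟩, hdvd⟩
        rcases (hchar d hd0 hdq).mp hdvd with rfl | h2d
        · rfl
        · exfalso; omega
      · rintro rfl
        exact ⟨⟨le_refl _, hq0⟩, (hchar 0 (le_refl _) hq0).mpr (Or.inl rfl)⟩
    rw [hfil, if_neg h2q, Finset.sum_singleton]
    norm_num [eI_zero]

/-! ### Weyl differencing for the incomplete sum -/

noncomputable def psi (q r c : ℤ) : ℝ :=
  if c % q = 0 then (r : ℝ) else (q : ℝ) / (2 * ((min (c % q) (q - c % q) : ℤ) : ℝ))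

lemma psi_nonneg {q r : ℤ} (hq : 0 < q) (hr : 0 ≤ r) (c : ℤ) : 0 ≤ psi q r c := by
  rw [psi]
  split
  · exact_mod_cast hr
  · rename_i h
    have h1 := Int.emod_nonneg c hq.ne'
    have h2 := Int.emod_lt_of_pos c hq
    have hm : (1:ℤ) ≤ min (c % q) (q - c % q) := by omega
    have hmR : (1:ℝ) ≤ ((min (c % q) (q - c % q) : ℤ) : ℝ) := by exact_mod_cast hm
    have hqR : (0:ℝ) ≤ (q:ℝ) := by exact_mod_cast hq.le
    positivity

lemma psi_congr {q r : ℤ} (c c' : ℤ) (h : c % q = c' % q) : psi q r c = psi q r c' := by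
  rw [psi, psi, h]

lemma ico_range' (lo hi : ℤ) (h : ℤ → ℂ) :
    ∑ l ∈ Finset.Ico lo hi, h l = ∑ j ∈ Finset.range (hi - lo).toNat, h (lo + (j:ℤ)) := by
  refine Finset.sum_nbij' (fun l => (l - lo).toNat) (fun j => lo + (j : ℤ)) ?_ ?_ ?_ ?_ ?_
  · intro l hl
    simp only [Finset.mem_Ico] at hl
    simp only [Finset.mem_range]
    omega
  · intro j hj
    simp only [Finset.mem_range] at hj
    simp only [Finset.mem_Ico]
    omega
  · intro l hl
    simp only [Finset.mem_Ico] at hl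
    show lo + (((l - lo).toNat : ℤ)) = l
    omega
  · intro j hj
    simp only [Finset.mem_range] at hj
    show ((lo + (j:ℤ)) - lo).toNat = j
    omega
  · intro l hl
    simp only [Finset.mem_Ico] at hl
    show h l = h (lo + (((l - lo).toNat : ℤ)))
    congr 1
    omega

lemma inner_bound (a b q r : ℤ) (hq : 2 ≤ q) (hr : 0 ≤ r) (d lo hi : ℤ) (hlen : hi - lo ≤ r) :
    norm (∑ l ∈ Finset.Ico lo hi,
        eI q (a * (l + d) ^ 2 + b * (l + d)) * (starRingEnd ℂ) (eI q (a * l ^ 2 + b * l)))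
      ≤ psi q r (2 * a * d) := by
  have hq0 : (0:ℤ) < q := by omega
  rw [ico_range' lo hi]
  have key : ∀ j : ℕ, eI q (a * ((lo + (j:ℤ)) + d) ^ 2 + b * ((lo + (j:ℤ)) + d))
        * (starRingEnd ℂ) (eI q (a * (lo + (j:ℤ)) ^ 2 + b * (lo + (j:ℤ))))
      = eI q (2 * a * d * lo + a * d ^ 2 + b * d) * eI q (2 * a * d) ^ j := by
    intro j
    rw [eI_conj, ← eI_add, eI_pow, ← eI_add]
    congr 1
    ring
  rw [Finset.sum_congr rfl (fun j _ => key j), ← Finset.mul_sum, norm_mul, eI_abs, one_mul]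
  by_cases hc : (2 * a * d) % q = 0
  · rw [psi, if_pos hc]
    calc norm (∑ j ∈ Finset.range (hi - lo).toNat, eI q (2 * a * d) ^ j)
        ≤ ∑ j ∈ Finset.range (hi - lo).toNat, norm (eI q (2 * a * d) ^ j) :=
          norm_sum_le _ _
      _ = ((hi - lo).toNat : ℝ) := by
          simp [norm_pow, eI_abs]
      _ ≤ (r : ℝ) := by
          have : ((hi - lo).toNat : ℤ) ≤ r := by omega
          exact_mod_cast this
  · rw [psi, if_neg hc]
    exact eI_geom_bound hq hc _

lemma weyl_reorg (a b q L r : ℤ) :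
    (∑ k ∈ Finset.Ico L (L + r), eI q (a * k ^ 2 + b * k)) *
      (starRingEnd ℂ) (∑ k ∈ Finset.Ico L (L + r), eI q (a * k ^ 2 + b * k))
    = ∑ d ∈ Finset.Ioo (-r) r, ∑ l ∈ Finset.Ico (max L (L - d)) (min (L + r) (L + r - d)),
        eI q (a * (l + d) ^ 2 + b * (l + d)) * (starRingEnd ℂ) (eI q (a * l ^ 2 + b * l)) := by
  rw [map_sum, Finset.sum_mul_sum, ← Finset.sum_product', Finset.sum_sigma']
  refine Finset.sum_nbij' (fun p => ⟨p.1 - p.2, p.2⟩) (fun x => (x.2 + x.1, x.2)) ?_ ?_ ?_ ?_ ?_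
  · intro p hp
    simp only [Finset.mem_product, Finset.mem_Ico] at hp
    simp only [Finset.mem_sigma, Finset.mem_Ioo, Finset.mem_Ico, max_le_iff, lt_min_iff]
    omega
  · intro x hx
    simp only [Finset.mem_sigma, Finset.mem_Ioo, Finset.mem_Ico, max_le_iff, lt_min_iff] at hx
    simp only [Finset.mem_product, Finset.mem_Ico]
    omega
  · intro p hp
    show ((p.2 + (p.1 - p.2), p.2) : ℤ × ℤ) = p
    ext <;> simp <;> ring
  · intro x hx
    show (⟨(x.2 + x.1) - x.2, x.2⟩ : (_ : ℤ) × ℤ) = x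
    ext <;> simp
  · intro p hp
    show eI q (a * p.1 ^ 2 + b * p.1) * (starRingEnd ℂ) (eI q (a * p.2 ^ 2 + b * p.2))
      = eI q (a * (p.2 + (p.1 - p.2)) ^ 2 + b * (p.2 + (p.1 - p.2)))
        * (starRingEnd ℂ) (eI q (a * p.2 ^ 2 + b * p.2))
    have : p.2 + (p.1 - p.2) = p.1 := by ring
    rw [this]

lemma weyl_sq_bound (a b q L r : ℤ) (hq : 2 ≤ q) (hr : 0 ≤ r) :
    (norm (∑ k ∈ Finset.Ico L (L + r), eI q (a * k ^ 2 + b * k))) ^ 2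
      ≤ ∑ d ∈ Finset.Ioo (-r) r, psi q r (2 * a * d) := by
  set S := ∑ k ∈ Finset.Ico L (L + r), eI q (a * k ^ 2 + b * k) with hS
  have h1 : (norm S) ^ 2 = norm (S * (starRingEnd ℂ) S) := by
    rw [norm_mul, Complex.norm_conj, sq]
  rw [h1, weyl_reorg]
  calc norm (∑ d ∈ Finset.Ioo (-r) r, ∑ l ∈ Finset.Ico (max L (L - d)) (min (L + r) (L + r - d)),
          eI q (a * (l + d) ^ 2 + b * (l + d)) * (starRingEnd ℂ) (eI q (a * l ^ 2 + b * l)))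
      ≤ ∑ d ∈ Finset.Ioo (-r) r, norm (∑ l ∈ Finset.Ico (max L (L - d)) (min (L + r) (L + r - d)),
          eI q (a * (l + d) ^ 2 + b * (l + d)) * (starRingEnd ℂ) (eI q (a * l ^ 2 + b * l))) :=
        norm_sum_le _ _
    _ ≤ ∑ d ∈ Finset.Ioo (-r) r, psi q r (2 * a * d) := by
        apply Finset.sum_le_sum
        intro d hd
        apply inner_bound a b q r hq hr
        have h1 : min (L + r) (L + r - d) ≤ L + r := min_le_left _ _
        have h2 : L ≤ max L (L - d) := le_max_left _ _
        omega

lemma sum_Ico_split (f : ℤ → ℝ) {α β γ : ℤ} (h1 : α ≤ β) (h2 : β ≤ γ) :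
    ∑ x ∈ Finset.Ico α γ, f x = ∑ x ∈ Finset.Ico α β, f x + ∑ x ∈ Finset.Ico β γ, f x := by
  rw [← Finset.sum_union (Finset.Ico_disjoint_Ico_consecutive _ _ _),
    Finset.Ico_union_Ico_eq_Ico h1 h2]

lemma piece_bound (a q r : ℤ) (hq : 2 ≤ q) (ha : Int.gcd a q = 1) (hr : 0 ≤ r)
    (α β : ℤ) (hlen : 2 * (β - α) ≤ q + 1) :
    ∑ d ∈ Finset.Ico α β, psi q r (2 * a * d) ≤ ∑ v ∈ Finset.Ico (0:ℤ) q, psi q r v := by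
  have hq0 : (0:ℤ) < q := by omega
  have hco : IsCoprime (q:ℤ) a := (Int.isCoprime_iff_gcd_eq_one.mpr ha).symm
  have h1 : ∀ d : ℤ, psi q r (2 * a * d) = psi q r ((2 * a * d) % q) :=
    fun d => psi_congr _ _ (Int.emod_emod_of_dvd _ (dvd_refl q)).symm
  have hinj : ∀ x ∈ Finset.Ico α β, ∀ y ∈ Finset.Ico α β,
      (2 * a * x) % q = (2 * a * y) % q → x = y := by
    intro x hx y hy hxy
    simp only [Finset.mem_Ico] at hx hy
    have hmod : q ∣ (2 * a * y) - (2 * a * x) := Int.ModEq.dvd hxy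
    have h2 : q ∣ 2 * (y - x) := by
      apply hco.dvd_of_dvd_mul_right
      have : 2 * (y - x) * a = 2 * a * y - 2 * a * x := by ring
      rw [this]
      exact hmod
    have h3 : 2 * (y - x) = 0 := by
      apply int_dvd_small hq0 h2
      rw [abs_lt]
      omega
    omega
  calc ∑ d ∈ Finset.Ico α β, psi q r (2 * a * d)
      = ∑ d ∈ Finset.Ico α β, psi q r ((2 * a * d) % q) := Finset.sum_congr rfl (fun d _ => h1 d)
    _ = ∑ v ∈ (Finset.Ico α β).image (fun d => (2 * a * d) % q), psi q r v :=
        (Finset.sum_image hinj).symm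
    _ ≤ ∑ v ∈ Finset.Ico (0:ℤ) q, psi q r v := by
        apply Finset.sum_le_sum_of_subset_of_nonneg
        · intro v hv
          simp only [Finset.mem_image] at hv
          obtain ⟨d, _, rfl⟩ := hv
          simp only [Finset.mem_Ico]
          exact ⟨Int.emod_nonneg _ hq0.ne', Int.emod_lt_of_pos _ hq0⟩
        · intro v hv _
          exact psi_nonneg hq0 hr v

lemma cover_bound (a q r : ℤ) (hq : 2 ≤ q) (ha : Int.gcd a q = 1) (hr0 : 0 ≤ r) (hrq : r ≤ q) :
    ∑ d ∈ Finset.Ioo (-r) r, psi q r (2 * a * d)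
      ≤ 4 * ∑ v ∈ Finset.Ico (0:ℤ) q, psi q r v := by
  have hq0 : (0:ℤ) < q := by omega
  set h : ℤ := q / 2 with hh
  have step1 : ∑ d ∈ Finset.Ioo (-r) r, psi q r (2 * a * d)
      ≤ ∑ d ∈ Finset.Ico (-q) q, psi q r (2 * a * d) := by
    apply Finset.sum_le_sum_of_subset_of_nonneg
    · intro d hd
      simp only [Finset.mem_Ioo] at hd
      simp only [Finset.mem_Ico]
      omega
    · intro d _ _
      exact psi_nonneg hq0 hr0 _
  have split1 := sum_Ico_split (fun d => psi q r (2 * a * d)) (show -q ≤ -q + h by omega) (show -q + h ≤ 0 by omega)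
  have split2 := sum_Ico_split (fun d => psi q r (2 * a * d)) (show (0:ℤ) ≤ h by omega) (show h ≤ q by omega)
  have split0 := sum_Ico_split (fun d => psi q r (2 * a * d)) (show -q ≤ (0:ℤ) by omega) (show (0:ℤ) ≤ q by omega)
  have p1 := piece_bound a q r hq ha hr0 (-q) (-q + h) (by omega)
  have p2 := piece_bound a q r hq ha hr0 (-q + h) 0 (by omega)
  have p3 := piece_bound a q r hq ha hr0 0 h (by omega)
  have p4 := piece_bound a q r hq ha hr0 h q (by omega)
  calc ∑ d ∈ Finset.Ioo (-r) r, psi q r (2 * a * d)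
      ≤ ∑ d ∈ Finset.Ico (-q) q, psi q r (2 * a * d) := step1
    _ = (∑ d ∈ Finset.Ico (-q) (-q+h), psi q r (2*a*d)) + (∑ d ∈ Finset.Ico (-q+h) 0, psi q r (2*a*d))
        + ((∑ d ∈ Finset.Ico (0:ℤ) h, psi q r (2*a*d)) + (∑ d ∈ Finset.Ico h q, psi q r (2*a*d))) := by
        rw [split0, split1, split2]
    _ ≤ 4 * ∑ v ∈ Finset.Ico (0:ℤ) q, psi q r v := by linarith

lemma harmonic_bound (q : ℤ) (hq : 2 ≤ q) :
    ∑ v ∈ Finset.Ico (1:ℤ) q, 1 / ((v:ℝ)) ≤ 1 + Real.log q := by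
  have hq0 : (0:ℤ) < q := by omega
  set n : ℕ := (q - 1).toNat with hn
  have hstep : ∑ v ∈ Finset.Ico (1:ℤ) q, 1 / ((v:ℝ)) = ∑ i ∈ Finset.range n, 1 / ((i:ℝ) + 1) := by
    refine Finset.sum_nbij' (fun v => (v - 1).toNat) (fun i => (i:ℤ) + 1) ?_ ?_ ?_ ?_ ?_
    · intro v hv
      simp only [Finset.mem_Ico] at hv
      simp only [Finset.mem_range]
      omega
    · intro i hi
      simp only [Finset.mem_range] at hi
      simp only [Finset.mem_Ico]
      omega
    · intro v hv
      simp only [Finset.mem_Ico] at hv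
      show (((v-1).toNat : ℤ)) + 1 = v
      omega
    · intro i hi
      show (((i:ℤ) + 1) - 1).toNat = i
      omega
    · intro v hv
      simp only [Finset.mem_Ico] at hv
      show 1 / ((v:ℝ)) = 1 / ((((v-1).toNat : ℕ) : ℝ) + 1)
      congr 1
      have : (((v-1).toNat : ℤ) : ℝ) = ((v:ℝ) - 1) := by
        have : ((v-1).toNat : ℤ) = v - 1 := by omega
        exact_mod_cast this
      push_cast at this ⊢
      linarith
  rw [hstep]
  have hh : ∑ i ∈ Finset.range n, 1 / ((i:ℝ) + 1) = ((harmonic n : ℚ) : ℝ) := by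
    rw [harmonic]
    push_cast
    exact Finset.sum_congr rfl (fun i _ => one_div _)
  rw [hh]
  calc ((harmonic n : ℚ) : ℝ) ≤ 1 + Real.log n := harmonic_le_one_add_log n
    _ ≤ 1 + Real.log q := by
      gcongr
      · have h1 : (1:ℝ) ≤ (n:ℝ) := by
          have : (1:ℤ) ≤ (n:ℤ) := by omega
          exact_mod_cast this
        linarith
      · have : ((n:ℤ):ℝ) ≤ (q:ℝ) := by exact_mod_cast (by omega : (n:ℤ) ≤ q)
        exact_mod_cast this

lemma tail_bound (q r : ℤ) (hq : 2 ≤ q) (hr0 : 0 ≤ r) (hrq : r ≤ q) :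
    ∑ v ∈ Finset.Ico (0:ℤ) q, psi q r v ≤ (q:ℝ) * (2 + Real.log q) := by
  have hq0 : (0:ℤ) < q := by omega
  have hqR : (0:ℝ) < (q:ℝ) := by exact_mod_cast hq0
  rw [sum_Ico_split (psi q r) (show (0:ℤ) ≤ 1 by norm_num) (show (1:ℤ) ≤ q by omega)]
  have h0 : ∑ x ∈ Finset.Ico (0:ℤ) 1, psi q r x = psi q r 0 := by
    have : Finset.Ico (0:ℤ) 1 = {0} := by
      ext x
      simp only [Finset.mem_Ico, Finset.mem_singleton]
      omega
    rw [this, Finset.sum_singleton]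
  have hpsi0 : psi q r 0 = (r:ℝ) := by
    rw [psi, if_pos (Int.zero_emod q)]
  have hbound : ∀ v ∈ Finset.Ico (1:ℤ) q,
      psi q r v ≤ (q:ℝ) / (2 * (v:ℝ)) + (q:ℝ) / (2 * ((q:ℝ) - (v:ℝ))) := by
    intro v hv
    simp only [Finset.mem_Ico] at hv
    have hv1 : 1 ≤ v := hv.1
    have hvq : v < q := hv.2
    have hvmod : v % q = v := Int.emod_eq_of_lt (by omega) (by omega)
    have hne : ¬ v % q = 0 := by omega
    rw [psi, if_neg hne, hvmod]
    have hc : ((min v (q - v) : ℤ) : ℝ) = min ((v:ℝ)) ((q:ℝ) - (v:ℝ)) := by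
      push_cast
      rfl
    rw [hc]
    have hvR : (1:ℝ) ≤ (v:ℝ) := by exact_mod_cast hv1
    have hqvR : (1:ℝ) ≤ (q:ℝ) - (v:ℝ) := by
      have h' : ((1:ℤ):ℝ) ≤ ((q - v : ℤ):ℝ) := Int.cast_le.mpr (by omega)
      push_cast at h'
      linarith
    rcases le_total ((v:ℝ)) ((q:ℝ) - (v:ℝ)) with hle | hle
    · rw [min_eq_left hle]
      have : (0:ℝ) ≤ (q:ℝ) / (2 * ((q:ℝ) - (v:ℝ))) := by positivity
      linarith
    · rw [min_eq_right hle]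
      have : (0:ℝ) ≤ (q:ℝ) / (2 * (v:ℝ)) := by positivity
      linarith
  have hsum : ∑ v ∈ Finset.Ico (1:ℤ) q, psi q r v
      ≤ ∑ v ∈ Finset.Ico (1:ℤ) q, ((q:ℝ) / (2 * (v:ℝ)) + (q:ℝ) / (2 * ((q:ℝ) - (v:ℝ)))) :=
    Finset.sum_le_sum hbound
  have hrefl : ∑ v ∈ Finset.Ico (1:ℤ) q, (q:ℝ) / (2 * ((q:ℝ) - (v:ℝ)))
      = ∑ v ∈ Finset.Ico (1:ℤ) q, (q:ℝ) / (2 * (v:ℝ)) := by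
    refine Finset.sum_nbij' (fun v => q - v) (fun v => q - v) ?_ ?_ ?_ ?_ ?_
    · intro v hv
      simp only [Finset.mem_Ico] at hv ⊢
      omega
    · intro v hv
      simp only [Finset.mem_Ico] at hv ⊢
      omega
    · intro v _
      show q - (q - v) = v
      ring
    · intro v _
      show q - (q - v) = v
      ring
    · intro v hv
      show (q:ℝ) / (2 * ((q:ℝ) - (v:ℝ))) = (q:ℝ) / (2 * (((q - v : ℤ)):ℝ))
      push_cast
      ring_nf
  have hhalf : ∑ v ∈ Finset.Ico (1:ℤ) q, (q:ℝ) / (2 * (v:ℝ))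
      = ((q:ℝ) / 2) * ∑ v ∈ Finset.Ico (1:ℤ) q, 1 / ((v:ℝ)) := by
    rw [Finset.mul_sum]
    apply Finset.sum_congr rfl
    intro v _
    field_simp
  have hharm := harmonic_bound q hq
  have hrR : (r:ℝ) ≤ (q:ℝ) := by exact_mod_cast hrq
  have hlogq : 0 ≤ Real.log q := Real.log_nonneg (by exact_mod_cast (by omega : (1:ℤ) ≤ q))
  rw [h0, hpsi0]
  have : ∑ v ∈ Finset.Ico (1:ℤ) q, psi q r v ≤ (q:ℝ) * (1 + Real.log q) := by
    calc ∑ v ∈ Finset.Ico (1:ℤ) q, psi q r v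
        ≤ ∑ v ∈ Finset.Ico (1:ℤ) q, ((q:ℝ) / (2 * (v:ℝ)) + (q:ℝ) / (2 * ((q:ℝ) - (v:ℝ)))) := hsum
      _ = ∑ v ∈ Finset.Ico (1:ℤ) q, (q:ℝ) / (2 * (v:ℝ))
          + ∑ v ∈ Finset.Ico (1:ℤ) q, (q:ℝ) / (2 * ((q:ℝ) - (v:ℝ))) := Finset.sum_add_distrib
      _ = 2 * (((q:ℝ) / 2) * ∑ v ∈ Finset.Ico (1:ℤ) q, 1 / ((v:ℝ))) := by
          rw [hrefl, hhalf]; ring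
      _ = (q:ℝ) * ∑ v ∈ Finset.Ico (1:ℤ) q, 1 / ((v:ℝ)) := by ring
      _ ≤ (q:ℝ) * (1 + Real.log q) := by
          apply mul_le_mul_of_nonneg_left hharm hqR.le
  linarith

lemma incomplete_bound (a b q : ℤ) (hq : 2 ≤ q) (ha : Int.gcd a q = 1) (L r : ℤ)
    (hr0 : 0 ≤ r) (hrq : r ≤ q) :
    norm (∑ k ∈ Finset.Ico L (L + r), eI q (a * k ^ 2 + b * k))
      ≤ 6 * Real.sqrt ((q:ℝ) * Real.log q) := by
  have hq0 : (0:ℤ) < q := by omega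
  have hqR : (0:ℝ) < (q:ℝ) := by exact_mod_cast hq0
  have hlog2 : (1/2 : ℝ) ≤ Real.log q := by
    have h2 : Real.log 2 ≤ Real.log q := by
      apply Real.log_le_log (by norm_num)
      exact_mod_cast hq
    have := Real.log_two_gt_d9
    linarith
  have hsq : (norm (∑ k ∈ Finset.Ico L (L + r), eI q (a * k ^ 2 + b * k))) ^ 2
      ≤ 36 * ((q:ℝ) * Real.log q) := by
    calc (norm (∑ k ∈ Finset.Ico L (L + r), eI q (a * k ^ 2 + b * k))) ^ 2
        ≤ ∑ d ∈ Finset.Ioo (-r) r, psi q r (2 * a * d) := weyl_sq_bound a b q L r hq hr0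
      _ ≤ 4 * ∑ v ∈ Finset.Ico (0:ℤ) q, psi q r v := cover_bound a q r hq ha hr0 hrq
      _ ≤ 4 * ((q:ℝ) * (2 + Real.log q)) := by
          have := tail_bound q r hq hr0 hrq
          linarith
      _ ≤ 36 * ((q:ℝ) * Real.log q) := by nlinarith
  have habs0 : 0 ≤ norm (∑ k ∈ Finset.Ico L (L + r), eI q (a * k ^ 2 + b * k)) :=
    norm_nonneg _
  calc norm (∑ k ∈ Finset.Ico L (L + r), eI q (a * k ^ 2 + b * k))
      = Real.sqrt ((norm (∑ k ∈ Finset.Ico L (L + r), eI q (a * k ^ 2 + b * k)))^2) :=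
        (Real.sqrt_sq habs0).symm
    _ ≤ Real.sqrt (36 * ((q:ℝ) * Real.log q)) := Real.sqrt_le_sqrt hsq
    _ = 6 * Real.sqrt ((q:ℝ) * Real.log q) := by
        rw [Real.sqrt_mul (by norm_num : (0:ℝ) ≤ 36), show (36:ℝ) = 6^2 by norm_num,
          Real.sqrt_sq (by norm_num : (0:ℝ) ≤ 6)]

/-- **Weyl evaluation of incomplete quadratic Gauss sums.** There is an absolute constant
`A > 0` such that for every nonempty interval of integers `I = [L, U] ∩ ℤ` and all integers
`a, b, q` with `q ≥ 2`, `gcd(a,q) = 1`, and `b` even when `q ≡ 0 (mod 4)`, odd when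
`q ≡ 2 (mod 4)` (arbitrary when `q` is odd), the modulus of
`∑_{k ∈ I} e^{2πi(ak² + bk)/q}` equals `C⋅|I|/√q` up to an error `≤ A√(q ln q)`,
for some `1/2 ≤ C ≤ √2`. -/
theorem weyl_incomplete_gauss_sum :
    ∃ A : ℝ, 0 < A ∧
      ∀ (L U a b q : ℤ), L ≤ U → 2 ≤ q → Int.gcd a q = 1 →
        (q % 4 = 0 → Even b) → (q % 4 = 2 → Odd b) →
        ∃ C : ℝ, 1 / 2 ≤ C ∧ C ≤ Real.sqrt 2 ∧
          |‖∑ k ∈ Finset.Icc L U,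
              Complex.exp (2 * (Real.pi : ℂ) * Complex.I *
                (((a : ℂ) * (k : ℂ) ^ 2 + (b : ℂ) * (k : ℂ)) / (q : ℂ)))‖
            - C * ((Finset.Icc L U).card : ℝ) / Real.sqrt q|
          ≤ A * Real.sqrt (q * Real.log q) := by
  refine ⟨10, by norm_num, ?_⟩
  intro L U a b q hLU hq ha hb4 hb2
  have hq0 : (0:ℤ) < q := by omega
  have hqR : (0:ℝ) < (q:ℝ) := by exact_mod_cast hq0
  have hsqq : (0:ℝ) < Real.sqrt q := Real.sqrt_pos.mpr hqR
  have hlog2 : (1/2 : ℝ) ≤ Real.log q := by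
    have h2 : Real.log 2 ≤ Real.log q := by
      apply Real.log_le_log (by norm_num)
      exact_mod_cast hq
    have := Real.log_two_gt_d9
    linarith
  have hsqrtql : (0:ℝ) ≤ Real.sqrt ((q:ℝ) * Real.log q) := Real.sqrt_nonneg _
  set N : ℤ := U + 1 - L with hN
  have hN1 : 1 ≤ N := by omega
  set r : ℤ := N % q with hr
  set m : ℤ := N / q with hm
  have hr0 : 0 ≤ r := Int.emod_nonneg N hq0.ne'
  have hrq : r < q := Int.emod_lt_of_pos N hq0
  have hm0 : 0 ≤ m := Int.ediv_nonneg (by omega) hq0.le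
  have hNmr : N = q * m + r := by
    rw [hr, hm]
    linarith [Int.mul_ediv_add_emod N q]
  set mn : ℕ := m.toNat with hmn
  have hmnZ : (mn : ℤ) = m := Int.toNat_of_nonneg hm0
  set G : ℂ := ∑ k ∈ Finset.Ico (0:ℤ) q, eI q (a * k ^ 2 + b * k) with hG
  set T : ℂ := ∑ k ∈ Finset.Ico L (L + r), eI q (a * k ^ 2 + b * k) with hT
  -- rewrite the statement's sum
  have hterm : ∀ k : ℤ, Complex.exp (2 * (Real.pi : ℂ) * Complex.I *
      (((a : ℂ) * (k : ℂ) ^ 2 + (b : ℂ) * (k : ℂ)) / (q : ℂ))) = eI q (a * k ^ 2 + b * k) := by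
    intro k
    rw [eI]
    congr 1
    push_cast
    ring
  have hIcc : Finset.Icc L U = Finset.Ico L (L + N) := by
    ext x
    simp only [Finset.mem_Icc, Finset.mem_Ico]
    omega
  have hSsum : (∑ k ∈ Finset.Icc L U, Complex.exp (2 * (Real.pi : ℂ) * Complex.I *
      (((a : ℂ) * (k : ℂ) ^ 2 + (b : ℂ) * (k : ℂ)) / (q : ℂ)))) = (mn : ℂ) * G + T := by
    rw [hIcc]
    calc (∑ k ∈ Finset.Ico L (L + N), Complex.exp (2 * (Real.pi : ℂ) * Complex.I *
          (((a : ℂ) * (k : ℂ) ^ 2 + (b : ℂ) * (k : ℂ)) / (q : ℂ))))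
        = ∑ k ∈ Finset.Ico L (L + N), eI q (a * k ^ 2 + b * k) :=
          Finset.sum_congr rfl (fun k _ => hterm k)
      _ = ∑ k ∈ Finset.Ico L (L + (q * (mn:ℤ) + r)), eI q (a * k ^ 2 + b * k) := by
          rw [hmnZ, ← hNmr]
      _ = (mn : ℂ) * G + T := sum_split hq0 _ (quad_per a b q) L r hr0 mn
  -- Gauss sum modulus
  have hGsq := gauss_sq a b q hq ha hb4 hb2
  have hGabs : norm G = Real.sqrt (if 2 ∣ q then ((2 * q : ℤ) : ℝ) else ((q : ℤ) : ℝ)) := by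
    have hns : (Complex.normSq G : ℂ) = (if 2 ∣ q then ((2 * q : ℤ) : ℂ) else ((q : ℤ) : ℂ)) := by
      rw [← Complex.mul_conj]
      exact hGsq
    have hns' : Complex.normSq G = (if 2 ∣ q then ((2 * q : ℤ) : ℝ) else ((q : ℤ) : ℝ)) := by
      by_cases h2 : 2 ∣ q
      · rw [if_pos h2] at hns ⊢
        exact_mod_cast hns
      · rw [if_neg h2] at hns ⊢
        exact_mod_cast hns
    rw [Complex.norm_def, hns']
  set C : ℝ := norm G / Real.sqrt q with hC
  have hCval : C = 1 ∨ C = Real.sqrt 2 := by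
    by_cases h2 : 2 ∣ q
    · right
      rw [hC, hGabs, if_pos h2]
      have : ((2 * q : ℤ) : ℝ) = 2 * (q:ℝ) := by push_cast; ring
      rw [this, Real.sqrt_mul (by norm_num : (0:ℝ) ≤ 2)]
      field_simp
    · left
      rw [hC, hGabs, if_neg h2]
      field_simp
  have hC1 : 1 ≤ Real.sqrt 2 := by
    rw [show (1:ℝ) = Real.sqrt 1 by simp]
    exact Real.sqrt_le_sqrt (by norm_num)
  have hChalf : 1 / 2 ≤ C := by
    rcases hCval with h | h
    · rw [h]; norm_num
    · rw [h]; linarith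
  have hCle : C ≤ Real.sqrt 2 := by
    rcases hCval with h | h
    · rw [h]; exact hC1
    · rw [h]
  have hC0 : 0 ≤ C := by linarith
  refine ⟨C, hChalf, hCle, ?_⟩
  have hGC : norm G = C * Real.sqrt q := by
    rw [hC]
    field_simp
  rw [hSsum]
  have hcard : ((Finset.Icc L U).card : ℝ) = (N : ℝ) := by
    rw [Int.card_Icc]
    have : ((U + 1 - L).toNat : ℤ) = N := by omega
    exact_mod_cast this
  rw [hcard]
  -- |abs S - mn * abs G| ≤ abs T
  have hTbound : norm T ≤ 6 * Real.sqrt ((q:ℝ) * Real.log q) :=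
    incomplete_bound a b q hq ha L r hr0 hrq.le
  have htri : |norm ((mn : ℂ) * G + T) - (mn : ℝ) * norm G| ≤ norm T := by
    have h1 : norm ((mn : ℂ) * G) = (mn : ℝ) * norm G := by
      rw [norm_mul, Complex.norm_natCast]
    calc |norm ((mn : ℂ) * G + T) - (mn : ℝ) * norm G|
        = |norm ((mn : ℂ) * G + T) - norm ((mn : ℂ) * G)| := by rw [h1]
      _ ≤ norm (((mn : ℂ) * G + T) - ((mn : ℂ) * G)) :=
          abs_norm_sub_norm_le _ _
      _ = norm T := by
          congr 1
          ring
  -- C * N / sqrt q = mn * abs G + r * abs G / q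
  have hsplitC : C * (N : ℝ) / Real.sqrt q = (mn : ℝ) * norm G + (r:ℝ) * norm G / (q:ℝ) := by
    have hss : Real.sqrt q * Real.sqrt q = (q:ℝ) := Real.mul_self_sqrt hqR.le
    have hNZ : N = q * (mn:ℤ) + r := by rw [hmnZ]; exact hNmr
    have hNR : (N : ℝ) = (q:ℝ) * (mn : ℝ) + (r : ℝ) := by exact_mod_cast hNZ
    have hs' : Real.sqrt (q:ℝ) ≠ 0 := hsqq.ne'
    have hq' : ((q:ℝ)) ≠ 0 := hqR.ne'
    rw [hGC, hNR]
    clear_value C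
    field_simp
    linear_combination (-((q:ℝ) * (mn:ℝ) + (r:ℝ))) * hss
  have hrG : (r:ℝ) * norm G / (q:ℝ) ≤ 2 * Real.sqrt ((q:ℝ) * Real.log q) := by
    have h1 : (r:ℝ) * norm G / (q:ℝ) ≤ Real.sqrt 2 * Real.sqrt q := by
      have hrR : (r:ℝ) ≤ (q:ℝ) := by exact_mod_cast hrq.le
      have hrR0 : (0:ℝ) ≤ (r:ℝ) := by exact_mod_cast hr0
      have hGle : norm G ≤ Real.sqrt 2 * Real.sqrt q := by
        rw [hGC]
        apply mul_le_mul_of_nonneg_right hCle (Real.sqrt_nonneg _)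
      calc (r:ℝ) * norm G / (q:ℝ) ≤ ((q:ℝ) * (Real.sqrt 2 * Real.sqrt q)) / (q:ℝ) := by
            apply (div_le_div_iff_of_pos_right hqR).mpr
            exact mul_le_mul hrR hGle (norm_nonneg _) hqR.le
        _ = Real.sqrt 2 * Real.sqrt q := by field_simp
    have h2 : Real.sqrt 2 * Real.sqrt q ≤ 2 * Real.sqrt ((q:ℝ) * Real.log q) := by
      rw [← Real.sqrt_mul (by norm_num : (0:ℝ) ≤ 2), show (2:ℝ) * Real.sqrt ((q:ℝ) * Real.log q)
          = Real.sqrt 4 * Real.sqrt ((q:ℝ) * Real.log q) by rw [show (4:ℝ) = 2^2 by norm_num,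
            Real.sqrt_sq (by norm_num : (0:ℝ) ≤ 2)], ← Real.sqrt_mul (by norm_num : (0:ℝ) ≤ 4)]
      apply Real.sqrt_le_sqrt
      nlinarith
    linarith
  calc |norm ((mn : ℂ) * G + T) - C * (N:ℝ) / Real.sqrt q|
      = |(norm ((mn : ℂ) * G + T) - (mn : ℝ) * norm G)
          - (r:ℝ) * norm G / (q:ℝ)| := by
        rw [hsplitC]
        congr 1
        ring
    _ ≤ |norm ((mn : ℂ) * G + T) - (mn : ℝ) * norm G|
          + |(r:ℝ) * norm G / (q:ℝ)| := by
        have h := abs_add_le (norm ((mn : ℂ) * G + T) - (mn : ℝ) * norm G)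
          (-((r:ℝ) * norm G / (q:ℝ)))
        rw [abs_neg] at h
        simpa [sub_eq_add_neg] using h
    _ ≤ norm T + (r:ℝ) * norm G / (q:ℝ) := by
        have habs : |(r:ℝ) * norm G / (q:ℝ)| = (r:ℝ) * norm G / (q:ℝ) := by
          apply _root_.abs_of_nonneg
          have hrR0 : (0:ℝ) ≤ (r:ℝ) := by exact_mod_cast hr0
          positivity
        rw [habs]
        linarith [htri]
    _ ≤ 6 * Real.sqrt ((q:ℝ) * Real.log q) + 2 * Real.sqrt ((q:ℝ) * Real.log q) := by
        linarith [hTbound, hrG]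
    _ ≤ 10 * Real.sqrt ((q:ℝ) * Real.log q) := by linarith
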